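/- Let n×(n-1) order matrix O have finite entries in ℕ ∪ {-∞} and suppose all Jacobi numbers J_i ≥ 0, i = 1,…,n. Then Σ_{i=1}^n J_i = Σ_{j=1}^{n-1} m_j, where m_j = max_i (o_{i,j} + J_i) with the max taken over i such that o_{i,j} ≠ -∞. -/

import Mathlib

open Finset

open Function

namespace LYG

variable {m : ℕ}

def W (O : Matrix (Fin (m+1)) (Fin m) (WithBot ℕ)) (a : Fin m → Fin (m+1)) : WithBot ℕ :=
  ∑ j, O (a j) j

def Valid (i : Fin (m+1)) (a : Fin m → Fin (m+1)) : Prop :=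
  Function.Injective a ∧ ∀ j, a j ≠ i

lemma valid_image {i : Fin (m+1)} {a : Fin m → Fin (m+1)} (h : Valid i a) :
    image a univ = (univ : Finset (Fin (m+1))).erase i := by
  apply Finset.eq_of_subset_of_card_le
  · intro x hx
    obtain ⟨j, _, rfl⟩ := Finset.mem_image.1 hx
    exact Finset.mem_erase.2 ⟨h.2 j, mem_univ _⟩
  · rw [Finset.card_erase_of_mem (mem_univ _), Finset.card_image_of_injective _ h.1]
    simp

lemma valid_exists_unique {i : Fin (m+1)} {a : Fin m → Fin (m+1)} (h : Valid i a)
    {i' : Fin (m+1)} (hi' : i' ≠ i) : ∃! j, a j = i' := by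
  have : i' ∈ image a univ := by
    rw [valid_image h]; exact Finset.mem_erase.2 ⟨hi', mem_univ _⟩
  obtain ⟨j, _, hj⟩ := Finset.mem_image.1 this
  exact ⟨j, hj, fun j' hj' => h.1 (hj'.trans hj.symm)⟩

def cnt (f : Fin m → Fin (m+1)) (i : Fin (m+1)) : ℕ :=
  (univ.filter (fun j => f j = i)).card

lemma cnt_valid {i : Fin (m+1)} {a : Fin m → Fin (m+1)} (h : Valid i a) (i' : Fin (m+1)) :
    cnt a i' = if i' = i then 0 else 1 := by
  unfold cnt
  split
  · next heq =>
    subst heq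
    rw [Finset.card_eq_zero, Finset.filter_eq_empty_iff]
    exact fun j _ => h.2 j
  · next hne =>
    obtain ⟨j, hj, huniq⟩ := valid_exists_unique h hne
    rw [Finset.card_eq_one]
    exact ⟨j, by
      ext j'
      simp only [Finset.mem_filter, mem_univ, true_and, Finset.mem_singleton]
      exact ⟨fun hh => huniq j' hh, fun hh => hh ▸ hj⟩⟩

lemma cnt_le_one_inj {f : Fin m → Fin (m+1)} (h : ∀ i, cnt f i ≤ 1) :
    Function.Injective f := by
  intro j j' hjj
  by_contra hne
  have hsub : ({j, j'} : Finset (Fin m)) ⊆ univ.filter (fun k => f k = f j) := by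
    intro x hx
    rcases Finset.mem_insert.1 hx with rfl | hx
    · simp
    · rw [Finset.mem_singleton.1 hx]
      simp [hjj.symm]
  have := Finset.card_le_card hsub
  rw [Finset.card_pair hne] at this
  have := h (f j)
  unfold cnt at this
  omega



lemma decomp {r₀ i₀ : Fin (m+1)} (hne : i₀ ≠ r₀) (u v : Fin m → Fin (m+1))
    (hdeg : ∀ i, cnt u i + cnt v i = if i = r₀ ∨ i = i₀ then 1 else 2) :
    ∃ A B : Fin m → Fin (m+1), Valid r₀ A ∧ Valid i₀ B ∧
      ∀ j, (A j = u j ∧ B j = v j) ∨ (A j = v j ∧ B j = u j) := by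
  classical
  set t : Fin m → Finset (Fin (m+1)) := fun j => ({u j, v j} : Finset (Fin (m+1))).erase r₀
    with ht
  have hall : ∀ S : Finset (Fin m), S.card ≤ (S.biUnion t).card := by
    intro S
    set N := S.biUnion t with hN
    have hrN : r₀ ∉ N := by
      intro hr
      obtain ⟨j, _, hj⟩ := Finset.mem_biUnion.1 hr
      exact (Finset.ne_of_mem_erase hj) rfl
    have hmemu : ∀ j ∈ S, u j ∈ insert r₀ N := by
      intro j hj
      by_cases h : u j = r₀
      · rw [h]; exact Finset.mem_insert_self _ _
      · exact Finset.mem_insert_of_mem (Finset.mem_biUnion.2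
          ⟨j, hj, Finset.mem_erase.2 ⟨h, by simp⟩⟩)
    have hmemv : ∀ j ∈ S, v j ∈ insert r₀ N := by
      intro j hj
      by_cases h : v j = r₀
      · rw [h]; exact Finset.mem_insert_self _ _
      · exact Finset.mem_insert_of_mem (Finset.mem_biUnion.2
          ⟨j, hj, Finset.mem_erase.2 ⟨h, by simp⟩⟩)
    have hcu := Finset.card_eq_sum_card_fiberwise hmemu
    have hcv := Finset.card_eq_sum_card_fiberwise hmemv
    have hboundu : ∀ i ∈ insert r₀ N, (S.filter (fun j => u j = i)).card ≤ cnt u i :=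
      fun i _ => Finset.card_le_card (Finset.filter_subset_filter _ (Finset.subset_univ S))
    have hboundv : ∀ i ∈ insert r₀ N, (S.filter (fun j => v j = i)).card ≤ cnt v i :=
      fun i _ => Finset.card_le_card (Finset.filter_subset_filter _ (Finset.subset_univ S))
    have h2 : S.card + S.card ≤ ∑ i ∈ insert r₀ N, (cnt u i + cnt v i) := by
      rw [Finset.sum_add_distrib]
      exact Nat.add_le_add (hcu ▸ Finset.sum_le_sum hboundu) (hcv ▸ Finset.sum_le_sum hboundv)
    have h3 : ∑ i ∈ insert r₀ N, (cnt u i + cnt v i) ≤ 1 + 2 * N.card := by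
      rw [Finset.sum_insert hrN]
      have e1 : cnt u r₀ + cnt v r₀ = 1 := by rw [hdeg]; simp
      have e2 : ∑ i ∈ N, (cnt u i + cnt v i) ≤ ∑ _i ∈ N, 2 :=
        Finset.sum_le_sum fun i _ => by rw [hdeg]; split <;> omega
      rw [Finset.sum_const, smul_eq_mul] at e2
      omega
    omega
  obtain ⟨A, hAinj, hA⟩ := (Finset.all_card_le_biUnion_card_iff_existsInjective' t).1 hall
  have hAne : ∀ j, A j ≠ r₀ := fun j => Finset.ne_of_mem_erase (hA j)
  have hAuv : ∀ j, A j = u j ∨ A j = v j := by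
    intro j
    have := Finset.mem_of_mem_erase (hA j)
    rcases Finset.mem_insert.1 this with h | h
    · exact Or.inl h
    · exact Or.inr (Finset.mem_singleton.1 h)
  set B : Fin m → Fin (m+1) := fun j => if A j = u j then v j else u j with hB
  have hpair : ∀ j, (A j = u j ∧ B j = v j) ∨ (A j = v j ∧ B j = u j) := by
    intro j
    by_cases h : A j = u j
    · exact Or.inl ⟨h, by simp [hB, h]⟩
    · exact Or.inr ⟨(hAuv j).resolve_left h, by simp [hB, h]⟩
  have hvA : Valid r₀ A := ⟨hAinj, hAne⟩
  have hcntA : ∀ i, cnt A i = if i = r₀ then 0 else 1 := cnt_valid hvA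
  have hcntsum : ∀ i, cnt A i + cnt B i = cnt u i + cnt v i := by
    intro i
    unfold cnt
    rw [Finset.card_filter, Finset.card_filter, Finset.card_filter, Finset.card_filter,
      ← Finset.sum_add_distrib, ← Finset.sum_add_distrib]
    refine Finset.sum_congr rfl fun j _ => ?_
    rcases hpair j with ⟨h1, h2⟩ | ⟨h1, h2⟩
    · rw [h1, h2]
    · rw [h1, h2, add_comm]
  have hcntB : ∀ i, cnt B i = if i = i₀ then 0 else 1 := by
    intro i
    have h1 := hcntsum i
    have h2 := hdeg i
    have h3 := hcntA i
    by_cases hi0 : i = i₀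
    · subst hi0
      simp only [or_true, if_true] at h2
      rw [if_neg hne] at h3
      rw [if_pos rfl]
      omega
    · rw [if_neg hi0]
      by_cases hir : i = r₀
      · subst hir
        simp only [true_or, if_true] at h2
        rw [if_pos rfl] at h3
        omega
      · simp only [hir, hi0, or_self, if_false] at h2
        rw [if_neg hir] at h3
        omega
  have hBinj : Function.Injective B := by
    apply cnt_le_one_inj
    intro i
    rw [hcntB i]
    split <;> omega
  have hBne : ∀ j, B j ≠ i₀ := by
    intro j hj
    have : j ∈ univ.filter (fun k => B k = i₀) := by simp [hj]
    have hc := hcntB i₀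
    rw [if_pos rfl] at hc
    unfold cnt at hc
    rw [Finset.card_eq_zero] at hc
    rw [hc] at this
    exact absurd this (Finset.notMem_empty j)
  exact ⟨A, B, hvA, ⟨hBinj, hBne⟩, hpair⟩

end LYG
section part3
open Equiv
namespace LYG
variable {m : ℕ} (O : Matrix (Fin (m+1)) (Fin m) (WithBot ℕ)) (J : Fin (m+1) → WithBot ℕ)

lemma W_le_J (hJ : ∀ i, J i =
      Finset.univ.sup (fun σ : Equiv.Perm (Fin m) => ∑ k, O (i.succAbove k) (σ k)))
    {i : Fin (m+1)} {a : Fin m → Fin (m+1)} (hv : Valid i a) : W O a ≤ J i := by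
  classical
  choose τ hτ using fun j => Fin.exists_succAbove_eq (hv.2 j)
  have hτinj : Function.Injective τ := by
    intro j j' h
    apply hv.1
    rw [← hτ j, ← hτ j', h]
  let σ : Equiv.Perm (Fin m) := Equiv.ofBijective τ (Finite.injective_iff_bijective.1 hτinj)
  have key : W O a = ∑ k, O (i.succAbove k) (σ⁻¹ k) :=
    calc W O a = ∑ j, (fun k => O (i.succAbove k) (σ⁻¹ k)) (σ j) := by
          refine Finset.sum_congr rfl fun j _ => ?_
          simp only [Equiv.Perm.inv_def, Equiv.symm_apply_apply]
          have : σ j = τ j := rfl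
          rw [this, hτ j]
      _ = ∑ k, O (i.succAbove k) (σ⁻¹ k) := Equiv.sum_comp σ (fun k => O (i.succAbove k) (σ⁻¹ k))
  rw [hJ i, key]
  exact Finset.le_sup (f := fun ρ : Equiv.Perm (Fin m) => ∑ k, O (i.succAbove k) (ρ k)) (Finset.mem_univ σ⁻¹)

lemma exists_opt (hJ : ∀ i, J i =
      Finset.univ.sup (fun σ : Equiv.Perm (Fin m) => ∑ k, O (i.succAbove k) (σ k)))
    (i : Fin (m+1)) : ∃ a, Valid i a ∧ W O a = J i := by
  obtain ⟨σ, -, hσ⟩ := Finset.exists_mem_eq_sup Finset.univ Finset.univ_nonempty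
    (fun σ : Equiv.Perm (Fin m) => ∑ k, O (i.succAbove k) (σ k))
  refine ⟨fun j => i.succAbove (σ⁻¹ j), ⟨?_, fun j => Fin.succAbove_ne i (σ⁻¹ j)⟩, ?_⟩
  · intro j j' h
    exact σ⁻¹.injective (Fin.succAbove_right_injective h)
  · rw [hJ i, hσ]
    calc ∑ j, O (i.succAbove (σ⁻¹ j)) j
        = ∑ k, O (i.succAbove (σ⁻¹ (σ k))) (σ k) := (Equiv.sum_comp σ _).symm
      _ = ∑ k, O (i.succAbove k) (σ k) := by simp

end LYG
end part3
namespace LYG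
variable {m : ℕ} (O : Matrix (Fin (m+1)) (Fin m) (WithBot ℕ)) (J : Fin (m+1) → WithBot ℕ)

lemma key_exchange (hJ : ∀ i, J i =
      Finset.univ.sup (fun σ : Equiv.Perm (Fin m) => ∑ k, O (i.succAbove k) (σ k)))
    (hJ0 : ∀ i, (0 : WithBot ℕ) ≤ J i)
    {i₀ : Fin (m+1)} {a₀ : Fin m → Fin (m+1)}
    (hv₀ : Valid i₀ a₀) (hw₀ : W O a₀ = J i₀) (j₀ : Fin m) (i₁ : Fin (m+1)) :
    O i₁ j₀ + J i₁ ≤ O (a₀ j₀) j₀ + J (a₀ j₀) := by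
  classical
  have hJbot : ∀ i, J i ≠ ⊥ := by
    intro i h
    have := hJ0 i
    rw [h, le_bot_iff] at this
    exact (WithBot.coe_ne_bot (a := (0:ℕ))) this
  set r₀ := a₀ j₀ with hr₀
  have hr0i0 : r₀ ≠ i₀ := hv₀.2 j₀
  by_cases hOb : O i₁ j₀ = ⊥
  · rw [hOb, WithBot.bot_add]
    exact bot_le
  by_cases h1r : i₁ = r₀
  · rw [h1r]
  have hWsplit : ∀ b : Fin m → Fin (m+1), W O b
      = O (b j₀) j₀ + ∑ j ∈ Finset.univ.erase j₀, O (b j) j := by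
    intro b
    rw [W, ← Finset.add_sum_erase _ _ (Finset.mem_univ j₀)]
  by_cases h1i0 : i₁ = i₀
  · -- direct exchange
    set b : Fin m → Fin (m+1) := Function.update a₀ j₀ i₁ with hb
    have hbval : ∀ j, j ≠ j₀ → b j = a₀ j := fun j hj => Function.update_of_ne hj _ _
    have hbj₀ : b j₀ = i₁ := Function.update_self _ _ _
    have hvb : Valid r₀ b := by
      constructor
      · intro j j' hjj
        by_cases hj : j = j₀ <;> by_cases hj' : j' = j₀
        · rw [hj, hj']
        · exfalso; rw [hj, hbj₀, hbval j' hj', h1i0] at hjj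
          exact hv₀.2 j' hjj.symm
        · exfalso; rw [hj', hbj₀, hbval j hj, h1i0] at hjj
          exact hv₀.2 j hjj
        · exact hv₀.1 (by rwa [hbval j hj, hbval j' hj'] at hjj)
      · intro j hj
        by_cases hjj : j = j₀
        · rw [hjj, hbj₀] at hj
          exact h1r hj
        · rw [hbval j hjj] at hj
          exact hjj (hv₀.1 hj)
    have hwb : O r₀ j₀ + W O b = O i₁ j₀ + W O a₀ := by
      rw [hWsplit b, hWsplit a₀, hbj₀,
        Finset.sum_congr rfl (fun j hj => by rw [hbval j (Finset.ne_of_mem_erase hj)]),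
        ← hr₀, add_left_comm]
    calc O i₁ j₀ + J i₁ = O r₀ j₀ + W O b := by rw [h1i0, ← hw₀, hwb, ← h1i0]
      _ ≤ O r₀ j₀ + J r₀ := add_le_add_right (W_le_J O J hJ hvb) _
  · -- general case via decomposition
    obtain ⟨a₁, hv₁, hw₁⟩ := exists_opt O J hJ i₁
    set u : Fin m → Fin (m+1) := Function.update a₀ j₀ i₁ with hu
    have huval : ∀ j, j ≠ j₀ → u j = a₀ j := fun j hj => Function.update_of_ne hj _ _
    have huj₀ : u j₀ = i₁ := Function.update_self _ _ _
    have hsplitcnt : ∀ (f : Fin m → Fin (m+1)) (i : Fin (m+1)), cnt f i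
        = (if f j₀ = i then 1 else 0)
          + ((Finset.univ.erase j₀).filter (fun j => f j = i)).card := by
      intro f i
      unfold cnt
      have huniv : (Finset.univ : Finset (Fin m)) = insert j₀ (Finset.univ.erase j₀) :=
        (Finset.insert_erase (Finset.mem_univ j₀)).symm
      conv_lhs => rw [huniv]
      rw [Finset.filter_insert]
      split
      · rw [Finset.card_insert_of_notMem
          (fun h => Finset.notMem_erase j₀ Finset.univ (Finset.mem_of_mem_filter _ h))]
        omega
      · rw [zero_add]
    have hsame : ∀ i, ((Finset.univ.erase j₀).filter (fun j => u j = i)).card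
        = ((Finset.univ.erase j₀).filter (fun j => a₀ j = i)).card := by
      intro i
      refine congrArg Finset.card (Finset.filter_congr fun j hj => ?_)
      rw [huval j (Finset.ne_of_mem_erase hj)]
    have hdeg : ∀ i, cnt u i + cnt a₁ i = if i = r₀ ∨ i = i₀ then 1 else 2 := by
      intro i
      have e1 := hsplitcnt u i
      rw [huj₀, hsame i] at e1
      have e2 := hsplitcnt a₀ i
      have e3 := cnt_valid hv₀ i
      have e4 := cnt_valid hv₁ i
      by_cases hi0 : i = i₀
      · rw [if_pos (Or.inr hi0)]
        rw [hi0] at e1 e2 e3 e4 ⊢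
        rw [if_neg h1i0] at e1
        rw [if_neg hr0i0] at e2
        rw [if_pos rfl] at e3
        rw [if_neg (fun h => h1i0 h.symm)] at e4
        omega
      · by_cases hir : i = r₀
        · rw [if_pos (Or.inl hir)]
          rw [hir] at e1 e2 e3 e4 ⊢
          rw [if_neg h1r] at e1
          rw [if_pos rfl] at e2
          rw [if_neg hr0i0] at e3
          rw [if_neg (fun h => h1r h.symm)] at e4
          omega
        · rw [if_neg (by tauto)]
          by_cases hi1 : i = i₁
          · rw [hi1] at e1 e2 e3 e4 ⊢
            rw [if_pos rfl] at e1
            rw [if_neg (fun h => h1r h.symm)] at e2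
            rw [if_neg h1i0] at e3
            rw [if_pos rfl] at e4
            omega
          · rw [if_neg (fun h => hi1 h.symm)] at e1
            rw [if_neg (fun h => hir h.symm)] at e2
            rw [if_neg hi0] at e3
            rw [if_neg hi1] at e4
            omega
    obtain ⟨A, B, hvA, hvB, hpair⟩ := decomp (Ne.symm hr0i0) u a₁ hdeg
    have hWpair : W O A + W O B = W O u + W O a₁ := by
      rw [W, W, W, W, ← Finset.sum_add_distrib, ← Finset.sum_add_distrib]
      refine Finset.sum_congr rfl fun j _ => ?_
      rcases hpair j with ⟨h1, h2⟩ | ⟨h1, h2⟩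
      · rw [h1, h2]
      · rw [h1, h2, add_comm]
    have hwu : O r₀ j₀ + W O u = O i₁ j₀ + W O a₀ := by
      rw [hWsplit u, hWsplit a₀, huj₀,
        Finset.sum_congr rfl (fun j hj => by rw [huval j (Finset.ne_of_mem_erase hj)]),
        ← hr₀, add_left_comm]
    have chain : O i₁ j₀ + J i₁ + J i₀ ≤ O r₀ j₀ + J r₀ + J i₀ :=
      calc O i₁ j₀ + J i₁ + J i₀ = O i₁ j₀ + W O a₁ + W O a₀ := by rw [hw₁, hw₀]
        _ = (O i₁ j₀ + W O a₀) + W O a₁ := by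
            rw [add_right_comm]
        _ = (O r₀ j₀ + W O u) + W O a₁ := by rw [hwu]
        _ = O r₀ j₀ + (W O A + W O B) := by rw [hWpair, ← add_assoc]
        _ ≤ O r₀ j₀ + (J r₀ + J i₀) :=
            add_le_add_right (add_le_add (W_le_J O J hJ hvA) (W_le_J O J hJ hvB)) _
        _ = O r₀ j₀ + J r₀ + J i₀ := (add_assoc _ _ _).symm
    exact (WithBot.add_le_add_iff_right (hJbot i₀)).1 chain

end LYG


/-- Li–Yuan–Gao, Lemma 5.6: let `O` be an `(m+1) × m` order matrix
with entries in `ℕ ∪ {-∞}` (modelled as `WithBot ℕ`, with `⊥` absorbing for `+`),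
such that every column has a finite entry.  Let
`J i = max_{μ : {1,…,n}\{i} ≃ columns} Σ_j O_{j, μ(j)}` be the Jacobi numbers and
suppose `J i ≥ 0` for all `i`.  Then `Σ_i J i = Σ_j m_j`, where
`m_j = max_i (O i j + J i)` (the max over all `i`; terms with `O i j = -∞`
contribute `-∞` and hence do not affect the max). -/
theorem sum_jacobi_eq_sum_colmax
    (m : ℕ) (O : Matrix (Fin (m+1)) (Fin m) (WithBot ℕ))
    (hcol : ∀ j : Fin m, ∃ i : Fin (m+1), O i j ≠ ⊥)
    (J : Fin (m+1) → WithBot ℕ)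
    (hJ : ∀ i, J i =
      Finset.univ.sup (fun σ : Equiv.Perm (Fin m) => ∑ k, O (i.succAbove k) (σ k)))
    (hJ0 : ∀ i, (0 : WithBot ℕ) ≤ J i) :
    (∑ i, J i) = ∑ j, Finset.univ.sup (fun i => O i j + J i) := by
  classical
  obtain ⟨a, hva, hwa⟩ := LYG.exists_opt O J hJ 0
  have hm : ∀ j, Finset.univ.sup (fun i => O i j + J i) = O (a j) j + J (a j) := by
    intro j
    apply le_antisymm
    · exact Finset.sup_le fun i _ => LYG.key_exchange O J hJ hJ0 hva hwa j i
    · exact Finset.le_sup (f := fun i => O i j + J i) (Finset.mem_univ (a j))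
  have hreindex : ∑ j, J (a j) = ∑ i ∈ Finset.univ.erase 0, J i := by
    apply Finset.sum_bij (fun j _ => a j)
    · intro j _
      exact Finset.mem_erase.2 ⟨hva.2 j, Finset.mem_univ _⟩
    · intro j _ j' _ h
      exact hva.1 h
    · intro i hi
      obtain ⟨j, hj, -⟩ := LYG.valid_exists_unique hva (Finset.mem_erase.1 hi).1
      exact ⟨j, Finset.mem_univ _, hj⟩
    · intro j _
      rfl
  calc ∑ i, J i = J 0 + ∑ i ∈ Finset.univ.erase 0, J i :=
        (Finset.add_sum_erase _ _ (Finset.mem_univ 0)).symm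
    _ = LYG.W O a + ∑ j, J (a j) := by rw [hwa, hreindex]
    _ = ∑ j, (O (a j) j + J (a j)) := by rw [LYG.W, ← Finset.sum_add_distrib]
    _ = ∑ j, Finset.univ.sup (fun i => O i j + J i) :=
        Finset.sum_congr rfl fun j _ => (hm j).symm
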